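/- There do not exist Boolean random variables A, X, M on a finite probability space such that: A and X are independent and each uniform on Bool; both P(M = false) > 0 and P(M = true) > 0; and there exist bits α and ξ with P(A = α and M = false) = P(M = false) and P(X = ξ and M = true) = P(M = true) (i.e., the value of M = false reveals A with certainty and the value M = true reveals X with certainty). -/

import Mathlib

open scoped Classical

/-- A probability mass function on a finite type. -/
def IsPMF {Ω : Type*} [Fintype Ω] (P : Ω → ℝ) : Prop :=
  (∀ ω, 0 ≤ P ω) ∧ ∑ ω, P ω = 1

/-- Probability of an event under a pmf. -/
noncomputable def Pr {Ω : Type*} [Fintype Ω] (P : Ω → ℝ) (E : Ω → Prop) : ℝ :=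
  ∑ ω, if E ω then P ω else 0

lemma Pr_diff {Ω : Type*} [Fintype Ω] (P : Ω → ℝ) (E F : Ω → Prop)
    (h : ∀ ω, F ω → E ω) :
    Pr P E - Pr P F = Pr P (fun ω => E ω ∧ ¬ F ω) := by
  unfold Pr
  rw [← Finset.sum_sub_distrib]
  apply Finset.sum_congr rfl
  intro x _
  by_cases h1 : E x <;> by_cases h2 : F x <;>
    simp [h1, h2]
  exact (h1 (h x h2)).elim

lemma Pr_pointwise {Ω : Type*} [Fintype Ω] (P : Ω → ℝ) (E : Ω → Prop)
    (hP0 : ∀ ω, 0 ≤ P ω) (hE : Pr P E = 0) (ω : Ω) (hω : 0 < P ω) : ¬ E ω := by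
  intro hEω
  have hle : P ω ≤ Pr P E := by
    unfold Pr
    have : P ω = if E ω then P ω else 0 := by simp [hEω]
    rw [this]
    exact Finset.single_le_sum (f := fun x => if E x then P x else 0)
      (fun x _ => by show 0 ≤ (if E x then P x else 0); split <;> simp [hP0 x]) (Finset.mem_univ ω)
  linarith

/-- There are no Boolean random variables `A, X, M` with `A, X` independent
and uniform, both values of `M` of positive probability, and such that
`M = false` reveals `A` with certainty while `M = true` reveals `X` with
certainty. -/
theorem no_message_reveals_both {Ω : Type*} [Fintype Ω] (P : Ω → ℝ) (hP : IsPMF P) :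
    ¬ ∃ A X M : Ω → Bool,
        (∀ va vx : Bool, Pr P (fun ω => A ω = va ∧ X ω = vx)
            = Pr P (fun ω => A ω = va) * Pr P (fun ω => X ω = vx)) ∧
        (∀ v, Pr P (fun ω => A ω = v) = 1/2) ∧
        (∀ v, Pr P (fun ω => X ω = v) = 1/2) ∧
        0 < Pr P (fun ω => M ω = false) ∧
        0 < Pr P (fun ω => M ω = true) ∧
        ∃ α ξ : Bool,
          Pr P (fun ω => A ω = α ∧ M ω = false) = Pr P (fun ω => M ω = false) ∧
          Pr P (fun ω => X ω = ξ ∧ M ω = true) = Pr P (fun ω => M ω = true) := by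
  rintro ⟨A, X, M, hind, hA, hX, hMf, hMt, α, ξ, hα, hξ⟩
  obtain ⟨hP0, hP1⟩ := hP
  -- Pr of the bad events is zero
  have hz1 : Pr P (fun ω => M ω = false ∧ ¬ (A ω = α ∧ M ω = false)) = 0 := by
    rw [← Pr_diff P _ _ (fun ω h => h.2), hα]; ring
  have hz2 : Pr P (fun ω => M ω = true ∧ ¬ (X ω = ξ ∧ M ω = true)) = 0 := by
    rw [← Pr_diff P _ _ (fun ω h => h.2), hξ]; ring
  have key : ∀ ω, 0 < P ω → (A ω = α ∨ X ω = ξ) := by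
    intro ω hω
    have h1 := Pr_pointwise P _ hP0 hz1 ω hω
    have h2 := Pr_pointwise P _ hP0 hz2 ω hω
    cases hM : M ω with
    | false =>
      left
      by_contra hc
      exact h1 ⟨hM, fun h => hc h.1⟩
    | true =>
      right
      by_contra hc
      exact h2 ⟨hM, fun h => hc h.1⟩
  -- Pr(A = α ∨ X = ξ) = 1
  have hunion : Pr P (fun ω => A ω = α ∨ X ω = ξ) = 1 := by
    rw [← hP1]
    unfold Pr
    apply Finset.sum_congr rfl
    intro ω _
    by_cases h : A ω = α ∨ X ω = ξ
    · simp [h]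
    · rcases lt_or_eq_of_le (hP0 ω) with h' | h'
      · exact absurd (key ω h') h
      · simp [h, ← h']
  -- inclusion-exclusion
  have hIE : Pr P (fun ω => A ω = α ∨ X ω = ξ)
      = Pr P (fun ω => A ω = α) + Pr P (fun ω => X ω = ξ)
        - Pr P (fun ω => A ω = α ∧ X ω = ξ) := by
    unfold Pr
    rw [← Finset.sum_add_distrib, ← Finset.sum_sub_distrib]
    apply Finset.sum_congr rfl
    intro ω _
    by_cases h1 : A ω = α <;> by_cases h2 : X ω = ξ <;> simp [h1, h2]
  rw [hunion, hind α ξ, hA α, hX ξ] at hIE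
  norm_num at hIE
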